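/- The graph Γ₁ (12 vertices a,...,l with edges forming the 12-cycle a b c d e f g h i j k l a together with the chords {a,d}, {b,g}, {c,i}, {e,j}, {h,k}, {f,l}) is not Pfaffian. -/

import Mathlib

open scoped Classical

noncomputable instance {α : Type*} (G : SimpleGraph α) : DecidableRel G.Adj :=
  fun _ _ => Classical.propDecidable _

variable {V : Type*}

/-- `m` is a perfect matching of `G`: a fixed-point-free involution matching each
vertex to an adjacent vertex. -/
def IsPerfMatching (G : SimpleGraph V) (m : Equiv.Perm V) : Prop :=
  (∀ v, m v ≠ v) ∧ (∀ v, m (m v) = v) ∧ ∀ v, G.Adj v (m v)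

/-- The sign of a list enumerating all elements of `V` exactly once, relative to the
enumeration sorted by the linear order `r` (junk value `1` for other lists). -/
noncomputable def enumSign [Fintype V] (r : LinearOrder V) (l : List V) : ℤ :=
  letI := r
  if h : l.Nodup ∧ ∀ x, x ∈ l then
    let l₀ := (Finset.univ : Finset V).sort (· ≤ ·)
    let e₀ : Fin l₀.length ≃ V :=
      List.Nodup.getEquivOfForallMemList l₀ (Finset.sort_nodup _ _)
        (fun x => (Finset.mem_sort _).2 (Finset.mem_univ x))
    let e : Fin l.length ≃ V := List.Nodup.getEquivOfForallMemList l h.1 h.2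
    have hlen : l₀.length = l.length := by
      simp only [l₀, Finset.length_sort]
      have h2 : l.toFinset = Finset.univ :=
        Finset.eq_univ_iff_forall.2 fun x => List.mem_toFinset.2 (h.2 x)
      rw [← h2, List.toFinset_card_of_nodup h.1]
    Equiv.Perm.sign (e₀.symm.trans ((finCongr hlen).trans e))
  else 1

/-- The listing `u₁ w₁ u₂ w₂ …` of the edges of the perfect matching `m`, each edge
written according to the orientation `σ` (pairs ordered by their `r`-smaller vertex). -/
noncomputable def matchingList [Fintype V] (r : LinearOrder V) (σ : V → V → ℤ)
    (m : Equiv.Perm V) : List V :=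
  letI := r
  ((Finset.univ.filter fun v : V => v < m v).sort (· ≤ ·)).flatMap fun v =>
    if σ v (m v) = 1 then [v, m v] else [m v, v]

/-- The sign of a perfect matching under the orientation `σ`. -/
noncomputable def matchingSign [Fintype V] (r : LinearOrder V) (σ : V → V → ℤ)
    (m : Equiv.Perm V) : ℤ :=
  enumSign r (matchingList r σ m)

/-- `G` is Pfaffian: some orientation `σ` (a skew sign function, `±1` on edges) gives
all perfect matchings the same sign. -/
def IsPfaffian [Fintype V] (G : SimpleGraph V) : Prop :=
  ∃ σ : V → V → ℤ, (∀ u v, G.Adj u v → σ u v = 1 ∨ σ u v = -1) ∧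
    (∀ u v, σ u v = -σ v u) ∧
    ∀ (r : LinearOrder V) (m₁ m₂ : Equiv.Perm V),
      IsPerfMatching G m₁ → IsPerfMatching G m₂ →
        matchingSign r σ m₁ = matchingSign r σ m₂

/-- `G` is non-Pfaffian, but deleting any edge yields a Pfaffian graph. -/
def MinimalNonPfaffian [Fintype V] (G : SimpleGraph V) : Prop :=
  ¬ IsPfaffian G ∧ ∀ e ∈ G.edgeSet, IsPfaffian (G.deleteEdges {e})

/-- The graph obtained from `G` by contracting the vertex set `S` to a single vertex
(the `Sum.inr` vertex), deleting loops and parallel edges. -/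
def contractSet (G : SimpleGraph V) (S : Set V) :
    SimpleGraph ({x : V // x ∉ S} ⊕ Unit) where
  Adj a b :=
    match a, b with
    | Sum.inl a, Sum.inl b => G.Adj a.1 b.1
    | Sum.inl a, Sum.inr _ => ∃ s ∈ S, G.Adj a.1 s
    | Sum.inr _, Sum.inl b => ∃ s ∈ S, G.Adj s b.1
    | Sum.inr _, Sum.inr _ => False
  symm := by
    constructor
    rintro (a | a) (b | b) h
    · exact h.symm
    · obtain ⟨s, hs, ha⟩ := h; exact ⟨s, hs, ha.symm⟩
    · obtain ⟨s, hs, ha⟩ := h; exact ⟨s, hs, ha.symm⟩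
    · exact h.elim
  loopless := by
    constructor
    rintro (a | a) h
    · exact G.irrefl h
    · exact h

/-- The graph `Γ₁`: the 12-cycle `a b c d e f g h i j k l` (vertices `0,…,11`)
together with the chords `{a,d}, {b,g}, {c,i}, {e,j}, {h,k}, {f,l}`. -/
def Gamma1 : SimpleGraph (Fin 12) :=
  SimpleGraph.fromEdgeSet
    {s(0, 1), s(1, 2), s(2, 3), s(3, 4), s(4, 5), s(5, 6), s(6, 7), s(7, 8), s(8, 9),
      s(9, 10), s(10, 11), s(11, 0),
      s(0, 3), s(1, 6), s(2, 8), s(4, 9), s(7, 10), s(5, 11)}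

abbrev r12 : LinearOrder (Fin 12) := inferInstance

lemma length_valid (l : List (Fin 12)) (hnd : l.Nodup) (hm : ∀ x, x ∈ l) : l.length = 12 := by
  have h2 : l.toFinset = Finset.univ :=
    Finset.eq_univ_iff_forall.2 fun x => List.mem_toFinset.2 (hm x)
  have h3 := List.toFinset_card_of_nodup hnd
  rw [h2] at h3
  simpa using h3.symm

set_option maxHeartbeats 1000000 in
lemma enumSign_eq_sign (l : List (Fin 12)) (hnd : l.Nodup) (hm : ∀ x, x ∈ l)
    (hlen : l.length = 12) (π : Equiv.Perm (Fin 12))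
    (hπ : ∀ i : Fin 12, π i = l.get (Fin.cast hlen.symm i)) :
    enumSign r12 l = Equiv.Perm.sign π := by
  rw [enumSign, dif_pos ⟨hnd, hm⟩]
  dsimp only
  congr! 2
  · apply Equiv.ext
    intro x
    have hs : (Finset.univ : Finset (Fin 12)).sort (· ≤ ·) = List.finRange 12 :=
      Fin.sort_univ 12
    simp only [Equiv.trans_apply, List.Nodup.getEquivOfForallMemList_symm_apply_val,
      List.Nodup.getEquivOfForallMemList_apply, finCongr_apply, hπ]
    congr 1
    ext
    simp only [Fin.coe_cast, List.Nodup.getEquivOfForallMemList_symm_apply_val, hs]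
    convert List.idxOf_finRange x using 2

lemma enumSign_valid (l : List (Fin 12)) (hnd : l.Nodup) (hm : ∀ x, x ∈ l)
    (hlen : l.length = 12) :
    enumSign r12 l =
      Equiv.Perm.sign ((finCongr hlen.symm).trans
        (List.Nodup.getEquivOfForallMemList l hnd hm)) :=
  enumSign_eq_sign l hnd hm hlen _ fun _ => rfl

lemma enumSign_flip (A B : List (Fin 12)) (x y : Fin 12)
    (hnd : (A ++ x :: y :: B).Nodup) (hm : ∀ z, z ∈ A ++ x :: y :: B) :
    enumSign r12 (A ++ y :: x :: B) = - enumSign r12 (A ++ x :: y :: B) := by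
  have hperm : (A ++ y :: x :: B).Perm (A ++ x :: y :: B) :=
    List.Perm.append_left A (List.Perm.swap x y B)
  have hnd' : (A ++ y :: x :: B).Nodup := hperm.nodup_iff.2 hnd
  have hm' : ∀ z, z ∈ A ++ y :: x :: B := fun z => hperm.mem_iff.2 (hm z)
  have hlen : (A ++ x :: y :: B).length = 12 := length_valid _ hnd hm
  have hlen' : (A ++ y :: x :: B).length = 12 := length_valid _ hnd' hm'
  have hA : A.length + 1 < 12 := by
    simp only [List.length_append, List.length_cons] at hlen
    omega
  set a : Fin 12 := ⟨A.length, by omega⟩ with ha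
  set b : Fin 12 := ⟨A.length + 1, hA⟩ with hb
  have hab : a ≠ b := by
    simp [ha, hb, Fin.ext_iff]
  rw [enumSign_valid _ hnd hm hlen, enumSign_valid _ hnd' hm' hlen']
  have hdec : ((finCongr hlen'.symm).trans
        (List.Nodup.getEquivOfForallMemList _ hnd' hm')) =
      ((finCongr hlen.symm).trans (List.Nodup.getEquivOfForallMemList _ hnd hm)) *
        Equiv.swap a b := by
    apply Equiv.ext
    intro i
    simp only [Equiv.trans_apply, Equiv.Perm.mul_apply,
      List.Nodup.getEquivOfForallMemList_apply, finCongr_apply, List.get_eq_getElem,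
      Fin.coe_cast]
    rcases lt_trichotomy i.val A.length with h1 | h1 | h1
    · rw [Equiv.swap_apply_of_ne_of_ne (by simp [ha, Fin.ext_iff]; omega)
        (by simp [hb, Fin.ext_iff]; omega)]
      rw [List.getElem_append_left (by omega), List.getElem_append_left (by omega)]
    · have hia : i = a := by simp [ha, Fin.ext_iff, h1]
      rw [hia, Equiv.swap_apply_left]
      rw [List.getElem_append_right (by simp [ha]), List.getElem_append_right (by simp [hb])]
      simp [ha, hb]
    · rcases Nat.eq_or_lt_of_le h1 with h2 | h2
      · have hib : i = b := by simp [hb, Fin.ext_iff]; omega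
        rw [hib, Equiv.swap_apply_right]
        rw [List.getElem_append_right (by simp [ha, hb] <;> omega),
          List.getElem_append_right (by simp [ha, hb] <;> omega)]
        simp [ha, hb]
      · rw [Equiv.swap_apply_of_ne_of_ne (by simp [ha, Fin.ext_iff]; omega)
          (by simp [hb, Fin.ext_iff]; omega)]
        rw [List.getElem_append_right (by omega), List.getElem_append_right (by omega)]
        have hgen : ∀ (n : ℕ) (hn1 : n < (y :: x :: B).length)
            (hn2 : n < (x :: y :: B).length), 2 ≤ n →
            (y :: x :: B)[n]'hn1 = (x :: y :: B)[n]'hn2 := by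
          intro n hn1 hn2 hn
          obtain ⟨k, rfl⟩ : ∃ k, n = k + 2 := ⟨n - 2, by omega⟩
          simp
        exact hgen _ _ _ (by omega)
  rw [hdec, map_mul, Equiv.Perm.sign_swap hab]
  push_cast
  ring

lemma flatMap_ifs_perm (q : Fin 12 × Fin 12 → Prop) [DecidablePred q]
    (ps : List (Fin 12 × Fin 12)) :
    (ps.flatMap fun p => if q p then [p.1, p.2] else [p.2, p.1]).Perm
      (ps.flatMap fun p => [p.1, p.2]) := by
  induction ps with
  | nil => rfl
  | cons p t ih =>
    simp only [List.flatMap_cons]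
    refine List.Perm.append ?_ ih
    by_cases h : q p
    · simp [h]
    · simp only [h, if_false]
      exact List.Perm.swap p.1 p.2 []

lemma enumSign_flatMap (q : Fin 12 × Fin 12 → Prop) [DecidablePred q] :
    ∀ (ps : List (Fin 12 × Fin 12)) (A : List (Fin 12)),
      (A ++ ps.flatMap fun p => [p.1, p.2]).Nodup →
      (∀ z, z ∈ A ++ ps.flatMap fun p => [p.1, p.2]) →
      enumSign r12 (A ++ ps.flatMap fun p => if q p then [p.1, p.2] else [p.2, p.1]) =
        (ps.map fun p => if q p then (1 : ℤ) else -1).prod *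
          enumSign r12 (A ++ ps.flatMap fun p => [p.1, p.2])
  | [], A, hnd, hm => by simp
  | p :: t, A, hnd, hm => by
    have hassoc : A ++ (p :: t).flatMap (fun p => [p.1, p.2]) =
        (A ++ [p.1, p.2]) ++ t.flatMap (fun p => [p.1, p.2]) := by simp
    have hnd2 : ((A ++ [p.1, p.2]) ++ t.flatMap fun p => [p.1, p.2]).Nodup := by
      rw [← hassoc]; exact hnd
    have hm2 : ∀ z, z ∈ (A ++ [p.1, p.2]) ++ t.flatMap fun p => [p.1, p.2] := by
      rw [← hassoc]; exact hm
    have ih := enumSign_flatMap q t (A ++ [p.1, p.2]) hnd2 hm2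
    have hback : (A ++ [p.1, p.2]) ++ (t.flatMap fun p => if q p then [p.1, p.2] else [p.2, p.1])
        = A ++ p.1 :: p.2 :: (t.flatMap fun p => if q p then [p.1, p.2] else [p.2, p.1]) := by
      simp
    by_cases hq : q p
    · simp only [List.flatMap_cons, hq, if_true, List.map_cons, List.prod_cons, one_mul]
      rw [show A ++ ([p.1, p.2] ++ t.flatMap fun p => if q p then [p.1, p.2] else [p.2, p.1])
          = (A ++ [p.1, p.2]) ++ t.flatMap (fun p => if q p then [p.1, p.2] else [p.2, p.1])
          from by simp, ih]
      simp only [List.append_assoc]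
    · simp only [List.flatMap_cons, hq, if_false, List.map_cons, List.prod_cons]
      have hndflip : (A ++ p.1 :: p.2 ::
          (t.flatMap fun p => if q p then [p.1, p.2] else [p.2, p.1])).Nodup := by
        refine (List.Perm.nodup_iff ?_).2 hnd2
        rw [hback.symm]
        exact List.Perm.append_left _ (flatMap_ifs_perm q t)
      have hmflip : ∀ z, z ∈ A ++ p.1 :: p.2 ::
          (t.flatMap fun p => if q p then [p.1, p.2] else [p.2, p.1]) := by
        intro z
        refine (List.Perm.mem_iff ?_).2 (hm2 z)
        rw [hback.symm]
        exact List.Perm.append_left _ (flatMap_ifs_perm q t)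
      rw [show A ++ ([p.2, p.1] ++ t.flatMap fun p => if q p then [p.1, p.2] else [p.2, p.1])
          = A ++ p.2 :: p.1 :: (t.flatMap fun p => if q p then [p.1, p.2] else [p.2, p.1])
          from by simp]
      rw [enumSign_flip _ _ _ _ hndflip hmflip]
      rw [← hback, ih]
      simp only [List.append_assoc]
      ring

lemma sort_helper (s : Finset (Fin 12)) (L : List (Fin 12)) (hL : L.Pairwise (· < ·))
    (hmem : ∀ x, x ∈ L ↔ x ∈ s) : s.sort (· ≤ ·) = L := by
  refine List.Perm.eq_of_pairwise' (Finset.pairwise_sort _ _) (hL.imp le_of_lt) ?_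
  refine (List.perm_ext_iff_of_nodup (Finset.sort_nodup _ _) hL.nodup).2 fun x => ?_
  rw [Finset.mem_sort]
  exact (hmem x).symm

lemma adj_0_1 : Gamma1.Adj 0 1 := by
  rw [Gamma1, SimpleGraph.fromEdgeSet_adj]
  exact ⟨by simp, by decide⟩

lemma adj_0_3 : Gamma1.Adj 0 3 := by
  rw [Gamma1, SimpleGraph.fromEdgeSet_adj]
  exact ⟨by simp, by decide⟩

lemma adj_0_11 : Gamma1.Adj 0 11 := by
  rw [Gamma1, SimpleGraph.fromEdgeSet_adj]
  exact ⟨by simp, by decide⟩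

lemma adj_1_2 : Gamma1.Adj 1 2 := by
  rw [Gamma1, SimpleGraph.fromEdgeSet_adj]
  exact ⟨by simp, by decide⟩

lemma adj_1_6 : Gamma1.Adj 1 6 := by
  rw [Gamma1, SimpleGraph.fromEdgeSet_adj]
  exact ⟨by simp, by decide⟩

lemma adj_2_3 : Gamma1.Adj 2 3 := by
  rw [Gamma1, SimpleGraph.fromEdgeSet_adj]
  exact ⟨by simp, by decide⟩

lemma adj_2_8 : Gamma1.Adj 2 8 := by
  rw [Gamma1, SimpleGraph.fromEdgeSet_adj]
  exact ⟨by simp, by decide⟩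

lemma adj_3_4 : Gamma1.Adj 3 4 := by
  rw [Gamma1, SimpleGraph.fromEdgeSet_adj]
  exact ⟨by simp, by decide⟩

lemma adj_4_5 : Gamma1.Adj 4 5 := by
  rw [Gamma1, SimpleGraph.fromEdgeSet_adj]
  exact ⟨by simp, by decide⟩

lemma adj_4_9 : Gamma1.Adj 4 9 := by
  rw [Gamma1, SimpleGraph.fromEdgeSet_adj]
  exact ⟨by simp, by decide⟩

lemma adj_5_6 : Gamma1.Adj 5 6 := by
  rw [Gamma1, SimpleGraph.fromEdgeSet_adj]
  exact ⟨by simp, by decide⟩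

lemma adj_5_11 : Gamma1.Adj 5 11 := by
  rw [Gamma1, SimpleGraph.fromEdgeSet_adj]
  exact ⟨by simp, by decide⟩

lemma adj_6_7 : Gamma1.Adj 6 7 := by
  rw [Gamma1, SimpleGraph.fromEdgeSet_adj]
  exact ⟨by simp, by decide⟩

lemma adj_7_8 : Gamma1.Adj 7 8 := by
  rw [Gamma1, SimpleGraph.fromEdgeSet_adj]
  exact ⟨by simp, by decide⟩

lemma adj_7_10 : Gamma1.Adj 7 10 := by
  rw [Gamma1, SimpleGraph.fromEdgeSet_adj]
  exact ⟨by simp, by decide⟩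

lemma adj_8_9 : Gamma1.Adj 8 9 := by
  rw [Gamma1, SimpleGraph.fromEdgeSet_adj]
  exact ⟨by simp, by decide⟩

lemma adj_9_10 : Gamma1.Adj 9 10 := by
  rw [Gamma1, SimpleGraph.fromEdgeSet_adj]
  exact ⟨by simp, by decide⟩

lemma adj_10_11 : Gamma1.Adj 10 11 := by
  rw [Gamma1, SimpleGraph.fromEdgeSet_adj]
  exact ⟨by simp, by decide⟩

def M1 : Equiv.Perm (Fin 12) :=
  ⟨![11, 2, 1, 4, 3, 6, 5, 8, 7, 10, 9, 0], ![11, 2, 1, 4, 3, 6, 5, 8, 7, 10, 9, 0], by decide, by decide⟩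

lemma hM1 : IsPerfMatching Gamma1 M1 := by
  refine ⟨by decide, by decide, ?_⟩
  intro v
  fin_cases v
  exacts [adj_0_11, adj_1_2, adj_1_2.symm, adj_3_4, adj_3_4.symm, adj_5_6, adj_5_6.symm, adj_7_8, adj_7_8.symm, adj_9_10, adj_9_10.symm, adj_0_11.symm]

lemma mlist_M1 (σ : Fin 12 → Fin 12 → ℤ) :
    matchingList r12 σ M1 =
      ([(0,11), (1,2), (3,4), (5,6), (7,8), (9,10)] : List (Fin 12 × Fin 12)).flatMap (fun p => if σ p.1 p.2 = 1 then [p.1, p.2] else [p.2, p.1]) := by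
  rw [matchingList]
  rw [sort_helper _ [0, 1, 3, 5, 7, 9] (by decide) (fun x => by rw [Finset.mem_filter]; revert x; decide)]
  simp only [List.flatMap_cons, List.flatMap_nil, List.append_nil, show M1 0 = 11 from by decide, show M1 1 = 2 from by decide, show M1 3 = 4 from by decide, show M1 5 = 6 from by decide, show M1 7 = 8 from by decide, show M1 9 = 10 from by decide]

lemma msign_M1 (σ : Fin 12 → Fin 12 → ℤ) :
    matchingSign r12 σ M1 =
      (List.map (fun p => if σ p.1 p.2 = 1 then (1 : ℤ) else -1) ([(0,11), (1,2), (3,4), (5,6), (7,8), (9,10)] : List (Fin 12 × Fin 12))).prod * (1 : ℤ) := by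
  rw [matchingSign, mlist_M1 σ]
  rw [show (([(0,11), (1,2), (3,4), (5,6), (7,8), (9,10)] : List (Fin 12 × Fin 12)).flatMap fun p => if σ p.1 p.2 = 1 then [p.1, p.2] else [p.2, p.1])
      = [] ++ (([(0,11), (1,2), (3,4), (5,6), (7,8), (9,10)] : List (Fin 12 × Fin 12)).flatMap fun p => if σ p.1 p.2 = 1 then [p.1, p.2] else [p.2, p.1]) from rfl]
  rw [enumSign_flatMap (fun p => σ p.1 p.2 = 1) ([(0,11), (1,2), (3,4), (5,6), (7,8), (9,10)] : List (Fin 12 × Fin 12)) [] (by decide) (by decide)]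
  have hbase : enumSign r12 (([] : List (Fin 12)) ++ (([(0,11), (1,2), (3,4), (5,6), (7,8), (9,10)] : List (Fin 12 × Fin 12)).flatMap fun p => [p.1, p.2])) = (1 : ℤ) := by
    rw [enumSign_eq_sign _ (by decide) (by decide) (by decide)
      (⟨![0, 11, 1, 2, 3, 4, 5, 6, 7, 8, 9, 10], ![0, 2, 3, 4, 5, 6, 7, 8, 9, 10, 11, 1], by decide, by decide⟩ : Equiv.Perm (Fin 12)) (by decide)]
    decide
  rw [hbase]

def M2 : Equiv.Perm (Fin 12) :=
  ⟨![3, 2, 1, 0, 5, 4, 7, 6, 9, 8, 11, 10], ![3, 2, 1, 0, 5, 4, 7, 6, 9, 8, 11, 10], by decide, by decide⟩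

lemma hM2 : IsPerfMatching Gamma1 M2 := by
  refine ⟨by decide, by decide, ?_⟩
  intro v
  fin_cases v
  exacts [adj_0_3, adj_1_2, adj_1_2.symm, adj_0_3.symm, adj_4_5, adj_4_5.symm, adj_6_7, adj_6_7.symm, adj_8_9, adj_8_9.symm, adj_10_11, adj_10_11.symm]

lemma mlist_M2 (σ : Fin 12 → Fin 12 → ℤ) :
    matchingList r12 σ M2 =
      ([(0,3), (1,2), (4,5), (6,7), (8,9), (10,11)] : List (Fin 12 × Fin 12)).flatMap (fun p => if σ p.1 p.2 = 1 then [p.1, p.2] else [p.2, p.1]) := by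
  rw [matchingList]
  rw [sort_helper _ [0, 1, 4, 6, 8, 10] (by decide) (fun x => by rw [Finset.mem_filter]; revert x; decide)]
  simp only [List.flatMap_cons, List.flatMap_nil, List.append_nil, show M2 0 = 3 from by decide, show M2 1 = 2 from by decide, show M2 4 = 5 from by decide, show M2 6 = 7 from by decide, show M2 8 = 9 from by decide, show M2 10 = 11 from by decide]

lemma msign_M2 (σ : Fin 12 → Fin 12 → ℤ) :
    matchingSign r12 σ M2 =
      (List.map (fun p => if σ p.1 p.2 = 1 then (1 : ℤ) else -1) ([(0,3), (1,2), (4,5), (6,7), (8,9), (10,11)] : List (Fin 12 × Fin 12))).prod * (1 : ℤ) := by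
  rw [matchingSign, mlist_M2 σ]
  rw [show (([(0,3), (1,2), (4,5), (6,7), (8,9), (10,11)] : List (Fin 12 × Fin 12)).flatMap fun p => if σ p.1 p.2 = 1 then [p.1, p.2] else [p.2, p.1])
      = [] ++ (([(0,3), (1,2), (4,5), (6,7), (8,9), (10,11)] : List (Fin 12 × Fin 12)).flatMap fun p => if σ p.1 p.2 = 1 then [p.1, p.2] else [p.2, p.1]) from rfl]
  rw [enumSign_flatMap (fun p => σ p.1 p.2 = 1) ([(0,3), (1,2), (4,5), (6,7), (8,9), (10,11)] : List (Fin 12 × Fin 12)) [] (by decide) (by decide)]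
  have hbase : enumSign r12 (([] : List (Fin 12)) ++ (([(0,3), (1,2), (4,5), (6,7), (8,9), (10,11)] : List (Fin 12 × Fin 12)).flatMap fun p => [p.1, p.2])) = (1 : ℤ) := by
    rw [enumSign_eq_sign _ (by decide) (by decide) (by decide)
      (⟨![0, 3, 1, 2, 4, 5, 6, 7, 8, 9, 10, 11], ![0, 2, 3, 1, 4, 5, 6, 7, 8, 9, 10, 11], by decide, by decide⟩ : Equiv.Perm (Fin 12)) (by decide)]
    decide
  rw [hbase]

def M3 : Equiv.Perm (Fin 12) :=
  ⟨![3, 6, 8, 0, 9, 11, 1, 10, 2, 4, 7, 5], ![3, 6, 8, 0, 9, 11, 1, 10, 2, 4, 7, 5], by decide, by decide⟩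

lemma hM3 : IsPerfMatching Gamma1 M3 := by
  refine ⟨by decide, by decide, ?_⟩
  intro v
  fin_cases v
  exacts [adj_0_3, adj_1_6, adj_2_8, adj_0_3.symm, adj_4_9, adj_5_11, adj_1_6.symm, adj_7_10, adj_2_8.symm, adj_4_9.symm, adj_7_10.symm, adj_5_11.symm]

lemma mlist_M3 (σ : Fin 12 → Fin 12 → ℤ) :
    matchingList r12 σ M3 =
      ([(0,3), (1,6), (2,8), (4,9), (5,11), (7,10)] : List (Fin 12 × Fin 12)).flatMap (fun p => if σ p.1 p.2 = 1 then [p.1, p.2] else [p.2, p.1]) := by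
  rw [matchingList]
  rw [sort_helper _ [0, 1, 2, 4, 5, 7] (by decide) (fun x => by rw [Finset.mem_filter]; revert x; decide)]
  simp only [List.flatMap_cons, List.flatMap_nil, List.append_nil, show M3 0 = 3 from by decide, show M3 1 = 6 from by decide, show M3 2 = 8 from by decide, show M3 4 = 9 from by decide, show M3 5 = 11 from by decide, show M3 7 = 10 from by decide]

lemma msign_M3 (σ : Fin 12 → Fin 12 → ℤ) :
    matchingSign r12 σ M3 =
      (List.map (fun p => if σ p.1 p.2 = 1 then (1 : ℤ) else -1) ([(0,3), (1,6), (2,8), (4,9), (5,11), (7,10)] : List (Fin 12 × Fin 12))).prod * (1 : ℤ) := by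
  rw [matchingSign, mlist_M3 σ]
  rw [show (([(0,3), (1,6), (2,8), (4,9), (5,11), (7,10)] : List (Fin 12 × Fin 12)).flatMap fun p => if σ p.1 p.2 = 1 then [p.1, p.2] else [p.2, p.1])
      = [] ++ (([(0,3), (1,6), (2,8), (4,9), (5,11), (7,10)] : List (Fin 12 × Fin 12)).flatMap fun p => if σ p.1 p.2 = 1 then [p.1, p.2] else [p.2, p.1]) from rfl]
  rw [enumSign_flatMap (fun p => σ p.1 p.2 = 1) ([(0,3), (1,6), (2,8), (4,9), (5,11), (7,10)] : List (Fin 12 × Fin 12)) [] (by decide) (by decide)]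
  have hbase : enumSign r12 (([] : List (Fin 12)) ++ (([(0,3), (1,6), (2,8), (4,9), (5,11), (7,10)] : List (Fin 12 × Fin 12)).flatMap fun p => [p.1, p.2])) = (1 : ℤ) := by
    rw [enumSign_eq_sign _ (by decide) (by decide) (by decide)
      (⟨![0, 3, 1, 6, 2, 8, 4, 9, 5, 11, 7, 10], ![0, 2, 4, 1, 6, 8, 3, 10, 5, 7, 11, 9], by decide, by decide⟩ : Equiv.Perm (Fin 12)) (by decide)]
    decide
  rw [hbase]

def M4 : Equiv.Perm (Fin 12) :=
  ⟨![11, 6, 3, 2, 5, 4, 1, 10, 9, 8, 7, 0], ![11, 6, 3, 2, 5, 4, 1, 10, 9, 8, 7, 0], by decide, by decide⟩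

lemma hM4 : IsPerfMatching Gamma1 M4 := by
  refine ⟨by decide, by decide, ?_⟩
  intro v
  fin_cases v
  exacts [adj_0_11, adj_1_6, adj_2_3, adj_2_3.symm, adj_4_5, adj_4_5.symm, adj_1_6.symm, adj_7_10, adj_8_9, adj_8_9.symm, adj_7_10.symm, adj_0_11.symm]

lemma mlist_M4 (σ : Fin 12 → Fin 12 → ℤ) :
    matchingList r12 σ M4 =
      ([(0,11), (1,6), (2,3), (4,5), (7,10), (8,9)] : List (Fin 12 × Fin 12)).flatMap (fun p => if σ p.1 p.2 = 1 then [p.1, p.2] else [p.2, p.1]) := by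
  rw [matchingList]
  rw [sort_helper _ [0, 1, 2, 4, 7, 8] (by decide) (fun x => by rw [Finset.mem_filter]; revert x; decide)]
  simp only [List.flatMap_cons, List.flatMap_nil, List.append_nil, show M4 0 = 11 from by decide, show M4 1 = 6 from by decide, show M4 2 = 3 from by decide, show M4 4 = 5 from by decide, show M4 7 = 10 from by decide, show M4 8 = 9 from by decide]

lemma msign_M4 (σ : Fin 12 → Fin 12 → ℤ) :
    matchingSign r12 σ M4 =
      (List.map (fun p => if σ p.1 p.2 = 1 then (1 : ℤ) else -1) ([(0,11), (1,6), (2,3), (4,5), (7,10), (8,9)] : List (Fin 12 × Fin 12))).prod * (1 : ℤ) := by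
  rw [matchingSign, mlist_M4 σ]
  rw [show (([(0,11), (1,6), (2,3), (4,5), (7,10), (8,9)] : List (Fin 12 × Fin 12)).flatMap fun p => if σ p.1 p.2 = 1 then [p.1, p.2] else [p.2, p.1])
      = [] ++ (([(0,11), (1,6), (2,3), (4,5), (7,10), (8,9)] : List (Fin 12 × Fin 12)).flatMap fun p => if σ p.1 p.2 = 1 then [p.1, p.2] else [p.2, p.1]) from rfl]
  rw [enumSign_flatMap (fun p => σ p.1 p.2 = 1) ([(0,11), (1,6), (2,3), (4,5), (7,10), (8,9)] : List (Fin 12 × Fin 12)) [] (by decide) (by decide)]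
  have hbase : enumSign r12 (([] : List (Fin 12)) ++ (([(0,11), (1,6), (2,3), (4,5), (7,10), (8,9)] : List (Fin 12 × Fin 12)).flatMap fun p => [p.1, p.2])) = (1 : ℤ) := by
    rw [enumSign_eq_sign _ (by decide) (by decide) (by decide)
      (⟨![0, 11, 1, 6, 2, 3, 4, 5, 7, 10, 8, 9], ![0, 2, 4, 5, 6, 7, 3, 8, 10, 11, 9, 1], by decide, by decide⟩ : Equiv.Perm (Fin 12)) (by decide)]
    decide
  rw [hbase]

def M5 : Equiv.Perm (Fin 12) :=
  ⟨![1, 0, 3, 2, 9, 6, 5, 8, 7, 4, 11, 10], ![1, 0, 3, 2, 9, 6, 5, 8, 7, 4, 11, 10], by decide, by decide⟩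

lemma hM5 : IsPerfMatching Gamma1 M5 := by
  refine ⟨by decide, by decide, ?_⟩
  intro v
  fin_cases v
  exacts [adj_0_1, adj_0_1.symm, adj_2_3, adj_2_3.symm, adj_4_9, adj_5_6, adj_5_6.symm, adj_7_8, adj_7_8.symm, adj_4_9.symm, adj_10_11, adj_10_11.symm]

lemma mlist_M5 (σ : Fin 12 → Fin 12 → ℤ) :
    matchingList r12 σ M5 =
      ([(0,1), (2,3), (4,9), (5,6), (7,8), (10,11)] : List (Fin 12 × Fin 12)).flatMap (fun p => if σ p.1 p.2 = 1 then [p.1, p.2] else [p.2, p.1]) := by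
  rw [matchingList]
  rw [sort_helper _ [0, 2, 4, 5, 7, 10] (by decide) (fun x => by rw [Finset.mem_filter]; revert x; decide)]
  simp only [List.flatMap_cons, List.flatMap_nil, List.append_nil, show M5 0 = 1 from by decide, show M5 2 = 3 from by decide, show M5 4 = 9 from by decide, show M5 5 = 6 from by decide, show M5 7 = 8 from by decide, show M5 10 = 11 from by decide]

lemma msign_M5 (σ : Fin 12 → Fin 12 → ℤ) :
    matchingSign r12 σ M5 =
      (List.map (fun p => if σ p.1 p.2 = 1 then (1 : ℤ) else -1) ([(0,1), (2,3), (4,9), (5,6), (7,8), (10,11)] : List (Fin 12 × Fin 12))).prod * (1 : ℤ) := by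
  rw [matchingSign, mlist_M5 σ]
  rw [show (([(0,1), (2,3), (4,9), (5,6), (7,8), (10,11)] : List (Fin 12 × Fin 12)).flatMap fun p => if σ p.1 p.2 = 1 then [p.1, p.2] else [p.2, p.1])
      = [] ++ (([(0,1), (2,3), (4,9), (5,6), (7,8), (10,11)] : List (Fin 12 × Fin 12)).flatMap fun p => if σ p.1 p.2 = 1 then [p.1, p.2] else [p.2, p.1]) from rfl]
  rw [enumSign_flatMap (fun p => σ p.1 p.2 = 1) ([(0,1), (2,3), (4,9), (5,6), (7,8), (10,11)] : List (Fin 12 × Fin 12)) [] (by decide) (by decide)]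
  have hbase : enumSign r12 (([] : List (Fin 12)) ++ (([(0,1), (2,3), (4,9), (5,6), (7,8), (10,11)] : List (Fin 12 × Fin 12)).flatMap fun p => [p.1, p.2])) = (1 : ℤ) := by
    rw [enumSign_eq_sign _ (by decide) (by decide) (by decide)
      (⟨![0, 1, 2, 3, 4, 9, 5, 6, 7, 8, 10, 11], ![0, 1, 2, 3, 4, 6, 7, 8, 9, 5, 10, 11], by decide, by decide⟩ : Equiv.Perm (Fin 12)) (by decide)]
    decide
  rw [hbase]

def M6 : Equiv.Perm (Fin 12) :=
  ⟨![1, 0, 8, 4, 3, 11, 7, 6, 2, 10, 9, 5], ![1, 0, 8, 4, 3, 11, 7, 6, 2, 10, 9, 5], by decide, by decide⟩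

lemma hM6 : IsPerfMatching Gamma1 M6 := by
  refine ⟨by decide, by decide, ?_⟩
  intro v
  fin_cases v
  exacts [adj_0_1, adj_0_1.symm, adj_2_8, adj_3_4, adj_3_4.symm, adj_5_11, adj_6_7, adj_6_7.symm, adj_2_8.symm, adj_9_10, adj_9_10.symm, adj_5_11.symm]

lemma mlist_M6 (σ : Fin 12 → Fin 12 → ℤ) :
    matchingList r12 σ M6 =
      ([(0,1), (2,8), (3,4), (5,11), (6,7), (9,10)] : List (Fin 12 × Fin 12)).flatMap (fun p => if σ p.1 p.2 = 1 then [p.1, p.2] else [p.2, p.1]) := by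
  rw [matchingList]
  rw [sort_helper _ [0, 2, 3, 5, 6, 9] (by decide) (fun x => by rw [Finset.mem_filter]; revert x; decide)]
  simp only [List.flatMap_cons, List.flatMap_nil, List.append_nil, show M6 0 = 1 from by decide, show M6 2 = 8 from by decide, show M6 3 = 4 from by decide, show M6 5 = 11 from by decide, show M6 6 = 7 from by decide, show M6 9 = 10 from by decide]

lemma msign_M6 (σ : Fin 12 → Fin 12 → ℤ) :
    matchingSign r12 σ M6 =
      (List.map (fun p => if σ p.1 p.2 = 1 then (1 : ℤ) else -1) ([(0,1), (2,8), (3,4), (5,11), (6,7), (9,10)] : List (Fin 12 × Fin 12))).prod * (-1 : ℤ) := by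
  rw [matchingSign, mlist_M6 σ]
  rw [show (([(0,1), (2,8), (3,4), (5,11), (6,7), (9,10)] : List (Fin 12 × Fin 12)).flatMap fun p => if σ p.1 p.2 = 1 then [p.1, p.2] else [p.2, p.1])
      = [] ++ (([(0,1), (2,8), (3,4), (5,11), (6,7), (9,10)] : List (Fin 12 × Fin 12)).flatMap fun p => if σ p.1 p.2 = 1 then [p.1, p.2] else [p.2, p.1]) from rfl]
  rw [enumSign_flatMap (fun p => σ p.1 p.2 = 1) ([(0,1), (2,8), (3,4), (5,11), (6,7), (9,10)] : List (Fin 12 × Fin 12)) [] (by decide) (by decide)]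
  have hbase : enumSign r12 (([] : List (Fin 12)) ++ (([(0,1), (2,8), (3,4), (5,11), (6,7), (9,10)] : List (Fin 12 × Fin 12)).flatMap fun p => [p.1, p.2])) = (-1 : ℤ) := by
    rw [enumSign_eq_sign _ (by decide) (by decide) (by decide)
      (⟨![0, 1, 2, 8, 3, 4, 5, 11, 6, 7, 9, 10], ![0, 1, 2, 4, 5, 6, 8, 9, 3, 10, 11, 7], by decide, by decide⟩ : Equiv.Perm (Fin 12)) (by decide)]
    decide
  rw [hbase]

/-- The graph `Γ₁` is not Pfaffian. -/
theorem stmt11 : ¬ IsPfaffian Gamma1 := by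
  rintro ⟨σ, hσ1, hσ2, hall⟩
  have sq_0_1 : (if σ 0 1 = 1 then (1 : ℤ) else -1) ^ 2 = 1 := by
    by_cases h : σ 0 1 = 1 <;> simp [h]
  have sq_0_3 : (if σ 0 3 = 1 then (1 : ℤ) else -1) ^ 2 = 1 := by
    by_cases h : σ 0 3 = 1 <;> simp [h]
  have sq_0_11 : (if σ 0 11 = 1 then (1 : ℤ) else -1) ^ 2 = 1 := by
    by_cases h : σ 0 11 = 1 <;> simp [h]
  have sq_1_2 : (if σ 1 2 = 1 then (1 : ℤ) else -1) ^ 2 = 1 := by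
    by_cases h : σ 1 2 = 1 <;> simp [h]
  have sq_1_6 : (if σ 1 6 = 1 then (1 : ℤ) else -1) ^ 2 = 1 := by
    by_cases h : σ 1 6 = 1 <;> simp [h]
  have sq_2_3 : (if σ 2 3 = 1 then (1 : ℤ) else -1) ^ 2 = 1 := by
    by_cases h : σ 2 3 = 1 <;> simp [h]
  have sq_2_8 : (if σ 2 8 = 1 then (1 : ℤ) else -1) ^ 2 = 1 := by
    by_cases h : σ 2 8 = 1 <;> simp [h]
  have sq_3_4 : (if σ 3 4 = 1 then (1 : ℤ) else -1) ^ 2 = 1 := by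
    by_cases h : σ 3 4 = 1 <;> simp [h]
  have sq_4_5 : (if σ 4 5 = 1 then (1 : ℤ) else -1) ^ 2 = 1 := by
    by_cases h : σ 4 5 = 1 <;> simp [h]
  have sq_4_9 : (if σ 4 9 = 1 then (1 : ℤ) else -1) ^ 2 = 1 := by
    by_cases h : σ 4 9 = 1 <;> simp [h]
  have sq_5_6 : (if σ 5 6 = 1 then (1 : ℤ) else -1) ^ 2 = 1 := by
    by_cases h : σ 5 6 = 1 <;> simp [h]
  have sq_5_11 : (if σ 5 11 = 1 then (1 : ℤ) else -1) ^ 2 = 1 := by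
    by_cases h : σ 5 11 = 1 <;> simp [h]
  have sq_6_7 : (if σ 6 7 = 1 then (1 : ℤ) else -1) ^ 2 = 1 := by
    by_cases h : σ 6 7 = 1 <;> simp [h]
  have sq_7_8 : (if σ 7 8 = 1 then (1 : ℤ) else -1) ^ 2 = 1 := by
    by_cases h : σ 7 8 = 1 <;> simp [h]
  have sq_7_10 : (if σ 7 10 = 1 then (1 : ℤ) else -1) ^ 2 = 1 := by
    by_cases h : σ 7 10 = 1 <;> simp [h]
  have sq_8_9 : (if σ 8 9 = 1 then (1 : ℤ) else -1) ^ 2 = 1 := by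
    by_cases h : σ 8 9 = 1 <;> simp [h]
  have sq_9_10 : (if σ 9 10 = 1 then (1 : ℤ) else -1) ^ 2 = 1 := by
    by_cases h : σ 9 10 = 1 <;> simp [h]
  have sq_10_11 : (if σ 10 11 = 1 then (1 : ℤ) else -1) ^ 2 = 1 := by
    by_cases h : σ 10 11 = 1 <;> simp [h]
  set S : ℤ := matchingSign r12 σ M1 with hS
  have e1 : S = (List.map (fun p => if σ p.1 p.2 = 1 then (1 : ℤ) else -1) ([(0,11), (1,2), (3,4), (5,6), (7,8), (9,10)] : List (Fin 12 × Fin 12))).prod * (1 : ℤ) := by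
    rw [hS]
    rw [hall r12 M1 M1 hM1 hM1]
    exact msign_M1 σ
  have e2 : S = (List.map (fun p => if σ p.1 p.2 = 1 then (1 : ℤ) else -1) ([(0,3), (1,2), (4,5), (6,7), (8,9), (10,11)] : List (Fin 12 × Fin 12))).prod * (1 : ℤ) := by
    rw [hS]
    rw [hall r12 M1 M2 hM1 hM2]
    exact msign_M2 σ
  have e3 : S = (List.map (fun p => if σ p.1 p.2 = 1 then (1 : ℤ) else -1) ([(0,3), (1,6), (2,8), (4,9), (5,11), (7,10)] : List (Fin 12 × Fin 12))).prod * (1 : ℤ) := by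
    rw [hS]
    rw [hall r12 M1 M3 hM1 hM3]
    exact msign_M3 σ
  have e4 : S = (List.map (fun p => if σ p.1 p.2 = 1 then (1 : ℤ) else -1) ([(0,11), (1,6), (2,3), (4,5), (7,10), (8,9)] : List (Fin 12 × Fin 12))).prod * (1 : ℤ) := by
    rw [hS]
    rw [hall r12 M1 M4 hM1 hM4]
    exact msign_M4 σ
  have e5 : S = (List.map (fun p => if σ p.1 p.2 = 1 then (1 : ℤ) else -1) ([(0,1), (2,3), (4,9), (5,6), (7,8), (10,11)] : List (Fin 12 × Fin 12))).prod * (1 : ℤ) := by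
    rw [hS]
    rw [hall r12 M1 M5 hM1 hM5]
    exact msign_M5 σ
  have e6 : S = (List.map (fun p => if σ p.1 p.2 = 1 then (1 : ℤ) else -1) ([(0,1), (2,8), (3,4), (5,11), (6,7), (9,10)] : List (Fin 12 × Fin 12))).prod * (-1 : ℤ) := by
    rw [hS]
    rw [hall r12 M1 M6 hM1 hM6]
    exact msign_M6 σ
  have hSS : S * S = 1 := by
    rw [e1]
    simp only [List.map_cons, List.map_nil, List.prod_cons, List.prod_nil]
    ring_nf
    simp only [sq_0_1, sq_0_3, sq_0_11, sq_1_2, sq_1_6, sq_2_3, sq_2_8, sq_3_4, sq_4_5, sq_4_9, sq_5_6, sq_5_11, sq_6_7, sq_7_8, sq_7_10, sq_8_9, sq_9_10, sq_10_11]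
    norm_num
  have hR : (List.map (fun p => if σ p.1 p.2 = 1 then (1 : ℤ) else -1) ([(0,11), (1,2), (3,4), (5,6), (7,8), (9,10)] : List (Fin 12 × Fin 12))).prod * (1 : ℤ) * ((List.map (fun p => if σ p.1 p.2 = 1 then (1 : ℤ) else -1) ([(0,3), (1,2), (4,5), (6,7), (8,9), (10,11)] : List (Fin 12 × Fin 12))).prod * (1 : ℤ)) * (((List.map (fun p => if σ p.1 p.2 = 1 then (1 : ℤ) else -1) ([(0,3), (1,6), (2,8), (4,9), (5,11), (7,10)] : List (Fin 12 × Fin 12))).prod * (1 : ℤ)) * ((List.map (fun p => if σ p.1 p.2 = 1 then (1 : ℤ) else -1) ([(0,11), (1,6), (2,3), (4,5), (7,10), (8,9)] : List (Fin 12 × Fin 12))).prod * (1 : ℤ)) * (((List.map (fun p => if σ p.1 p.2 = 1 then (1 : ℤ) else -1) ([(0,1), (2,3), (4,9), (5,6), (7,8), (10,11)] : List (Fin 12 × Fin 12))).prod * (1 : ℤ)) * ((List.map (fun p => if σ p.1 p.2 = 1 then (1 : ℤ) else -1) ([(0,1), (2,8), (3,4), (5,11), (6,7), (9,10)] : List (Fin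 12 × Fin 12))).prod * (-1 : ℤ)))) = -1 := by
    simp only [List.map_cons, List.map_nil, List.prod_cons, List.prod_nil]
    ring_nf
    simp only [sq_0_1, sq_0_3, sq_0_11, sq_1_2, sq_1_6, sq_2_3, sq_2_8, sq_3_4, sq_4_5, sq_4_9, sq_5_6, sq_5_11, sq_6_7, sq_7_8, sq_7_10, sq_8_9, sq_9_10, sq_10_11]
    norm_num
  have hfinal : (1 : ℤ) = -1 := by
    calc (1 : ℤ) = S * S * (S * S * (S * S)) := by rw [hSS]; norm_num
    _ = -1 := by
        nth_rewrite 6 [e6]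
        nth_rewrite 5 [e5]
        nth_rewrite 4 [e4]
        nth_rewrite 3 [e3]
        nth_rewrite 2 [e2]
        nth_rewrite 1 [e1]
        exact hR
  exact absurd hfinal (by norm_num)
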